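/- Let c be a Schur stable monic real polynomial of degree n, and for m > n let P^{c,d}_m be the m×m weighted symmetric Toeplitz matrix built from the trigonometric polynomial p^{c,d}. If P^{c,d}_m is positive definite, then p^{c,d}(θ) > 0 for all θ, and consequently d is Schur stable. Hence the convex LMI set {d ∈ ℝⁿ : P^{c,d}_m ≻ 0} is contained in the set of coefficient vectors of Schur stable monic polynomials of degree n. -/

import Mathlib

open Polynomial Complex Matrix Finset

/-- Fourier (cosine) coefficients of `p^{c,d}(θ) = c(e^{-iθ})d(e^{iθ}) + c(e^{iθ})d(e^{-iθ})`
written in the form `p₀ + Σ_{l≥1} 2 p_l cos(lθ)`: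
`p₀ = 2 Σ_j c_j d_j` and `p_l = Σ_{|j-k|=l} c_j d_k` for `l ≥ 1`. -/
noncomputable def pcdCoeff (n : ℕ) (c d : Polynomial ℝ) (l : ℕ) : ℝ :=
  if l = 0 then 2 * ∑ j ∈ Finset.range (n + 1), c.coeff j * d.coeff j
  else ∑ j ∈ Finset.range (n + 1), ∑ k ∈ Finset.range (n + 1),
    if ((j : ℤ) - (k : ℤ)).natAbs = l then c.coeff j * d.coeff k else 0

/-- The `m × m` weighted symmetric banded Toeplitz matrix with `(j,k)` entry
`(m/(m-|j-k|)) p_{|j-k|}` for `|j-k| ≤ n`, else `0`. -/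
noncomputable def Pmat (n m : ℕ) (p : ℕ → ℝ) : Matrix (Fin m) (Fin m) ℝ :=
  fun j k =>
    if ((j : ℤ) - (k : ℤ)).natAbs ≤ n then
      ((m : ℝ) / ((m : ℝ) - (((j : ℤ) - (k : ℤ)).natAbs : ℝ))) * p ((( j : ℤ) - (k : ℤ)).natAbs)
    else 0

lemma count_one (m l : ℕ) (hlm : l < m) :
    ∑ j ∈ range m, ∑ k ∈ range m,
      (if ((j:ℤ) - k).natAbs = l then (1:ℝ) else 0)
    = if l = 0 then (m:ℝ) else 2 * ((m:ℝ) - l) := by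
  have hsum : ∀ l' : ℕ, l' ≤ m → ∑ k ∈ range m, (if k + l' < m then (1:ℝ) else 0) = (m:ℝ) - l' := by
    intro l' hl'
    have hfil : (range m).filter (fun k => k + l' < m) = range (m - l') := by
      ext k; simp only [Finset.mem_filter, Finset.mem_range]; omega
    rw [Finset.sum_ite, Finset.sum_const, Finset.sum_const, hfil, card_range,
      smul_zero, add_zero, nsmul_eq_mul, mul_one, Nat.cast_sub hl']
  rcases Nat.eq_zero_or_pos l with hl | hl
  · subst hl
    have key : ∀ j k : ℕ, (((j:ℤ) - k).natAbs = 0) ↔ j = k := by intro j k; omega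
    simp only [if_pos rfl]
    have : ∀ j ∈ range m, ∑ k ∈ range m,
        (if ((j:ℤ) - k).natAbs = 0 then (1:ℝ) else 0) = 1 := by
      intro j hj
      rw [Finset.sum_eq_single j]
      · simp [key]
      · intro k _ hk; rw [if_neg (by simpa [key] using fun h => hk h.symm)]
      · intro h; exact absurd hj h
    rw [Finset.sum_congr rfl this, Finset.sum_const, card_range, nsmul_eq_mul, mul_one]
    simp
  · have key : ∀ j k : ℕ, (((j:ℤ) - k).natAbs = l) ↔ (j = k + l ∨ k = j + l) := by
      intro j k; omega
    have step : ∀ j ∈ range m, ∑ k ∈ range m,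
        (if ((j:ℤ) - k).natAbs = l then (1:ℝ) else 0)
        = ∑ k ∈ range m, ((if j = k + l then (1:ℝ) else 0) + (if k = j + l then 1 else 0)) := by
      intro j _
      refine Finset.sum_congr rfl fun k _ => ?_
      by_cases h : ((j:ℤ) - k).natAbs = l
      · rw [if_pos h]
        rcases (key j k).1 h with h' | h'
        · rw [if_pos h', if_neg (by omega), add_zero]
        · rw [if_pos h']
          by_cases h'' : j = k + l
          · omega
          · rw [if_neg h'', zero_add]
      · rw [if_neg h, if_neg (fun h' => h ((key j k).2 (Or.inl h'))),
          if_neg (fun h' => h ((key j k).2 (Or.inr h'))), add_zero]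
    rw [Finset.sum_congr rfl step, if_neg (by omega)]
    have e1 : ∑ j ∈ range m, ∑ k ∈ range m,
        ((if j = k + l then (1:ℝ) else 0) + (if k = j + l then 1 else 0))
        = (∑ j ∈ range m, ∑ k ∈ range m, (if j = k + l then (1:ℝ) else 0))
          + ∑ j ∈ range m, ∑ k ∈ range m, (if k = j + l then (1:ℝ) else 0) := by
      rw [← Finset.sum_add_distrib]
      exact Finset.sum_congr rfl fun j _ => by rw [← Finset.sum_add_distrib]
    rw [e1]
    have e2 : ∑ j ∈ range m, ∑ k ∈ range m, (if j = k + l then (1:ℝ) else 0)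
        = (m:ℝ) - l := by
      rw [Finset.sum_comm]
      have : ∀ k ∈ range m, ∑ j ∈ range m, (if j = k + l then (1:ℝ) else 0)
          = (if k + l < m then (1:ℝ) else 0) := by
        intro k _
        rw [Finset.sum_ite_eq' (range m) (k + l) (fun _ => (1:ℝ))]
        simp [Finset.mem_range]
      rw [Finset.sum_congr rfl this, hsum l hlm.le]
    have e3 : ∑ j ∈ range m, ∑ k ∈ range m, (if k = j + l then (1:ℝ) else 0)
        = (m:ℝ) - l := by
      have : ∀ j ∈ range m, ∑ k ∈ range m, (if k = j + l then (1:ℝ) else 0)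
          = (if j + l < m then (1:ℝ) else 0) := by
        intro j _
        rw [Finset.sum_ite_eq' (range m) (j + l) (fun _ => (1:ℝ))]
        simp [Finset.mem_range]
      rw [Finset.sum_congr rfl this, hsum l hlm.le]
    rw [e2, e3]; ring

lemma cos_natAbs (s : ℤ) (θ : ℝ) :
    Real.cos ((s:ℝ) * θ) = Real.cos ((s.natAbs:ℝ) * θ) := by
  rw [Nat.cast_natAbs (α := ℝ), Int.cast_abs]
  rcases abs_choice ((s:ℝ)) with h | h
  · rw [h]
  · rw [h, neg_mul, Real.cos_neg]

lemma cos_natAbs' (a b : ℤ) (θ : ℝ) :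
    Real.cos (((a:ℝ) - b) * θ) = Real.cos ((((a - b).natAbs : ℕ) : ℝ) * θ) := by
  have h : ((a:ℝ) - b) = (((a - b : ℤ)):ℝ) := by push_cast; ring
  rw [h, cos_natAbs]

lemma count_cos (m l : ℕ) (hlm : l < m) (θ : ℝ) :
    ∑ j ∈ range m, ∑ k ∈ range m,
      (if ((j:ℤ) - k).natAbs = l then Real.cos (((j - k : ℤ) : ℝ) * θ) else 0)
    = Real.cos ((l:ℝ) * θ) * (if l = 0 then (m:ℝ) else 2 * ((m:ℝ) - l)) := by
  have step : ∀ j ∈ range m, ∀ k ∈ range m,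
      (if ((j:ℤ) - k).natAbs = l then Real.cos (((j - k : ℤ) : ℝ) * θ) else 0)
      = Real.cos ((l:ℝ) * θ) * (if ((j:ℤ) - k).natAbs = l then (1:ℝ) else 0) := by
    intro j _ k _
    by_cases h : ((j:ℤ) - k).natAbs = l
    · rw [if_pos h, if_pos h, mul_one, cos_natAbs, h]
    · rw [if_neg h, if_neg h, mul_zero]
  calc ∑ j ∈ range m, ∑ k ∈ range m,
      (if ((j:ℤ) - k).natAbs = l then Real.cos (((j - k : ℤ) : ℝ) * θ) else 0)
      = ∑ j ∈ range m, ∑ k ∈ range m,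
        Real.cos ((l:ℝ) * θ) * (if ((j:ℤ) - k).natAbs = l then (1:ℝ) else 0) := by
        refine Finset.sum_congr rfl fun j hj => Finset.sum_congr rfl fun k hk => step j hj k hk
    _ = Real.cos ((l:ℝ) * θ) * ∑ j ∈ range m, ∑ k ∈ range m,
        (if ((j:ℤ) - k).natAbs = l then (1:ℝ) else 0) := by
        rw [Finset.mul_sum]
        exact Finset.sum_congr rfl fun j _ => by rw [Finset.mul_sum]
    _ = _ := by rw [count_one m l hlm]

lemma pcd_eq (n : ℕ) (c d : Polynomial ℝ) (l : ℕ) :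
    pcdCoeff n c d l = (if l = 0 then 2 else 1) *
      ∑ a ∈ range (n+1), ∑ b ∈ range (n+1),
        (if ((a:ℤ) - b).natAbs = l then c.coeff a * d.coeff b else 0) := by
  unfold pcdCoeff
  split_ifs with h
  · subst h
    congr 1
    refine Finset.sum_congr rfl fun a ha => ?_
    rw [Finset.sum_eq_single a]
    · rw [if_pos (by omega)]
    · intro b _ hb; rw [if_neg (by omega)]
    · intro ha'; exact absurd ha ha'
  · rw [one_mul]

lemma sum4_swap {M : Type*} [AddCommMonoid M] (s t u v : Finset ℕ)
    (F : ℕ → ℕ → ℕ → ℕ → M) :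
    ∑ j ∈ s, ∑ k ∈ t, ∑ a ∈ u, ∑ b ∈ v, F j k a b
    = ∑ a ∈ u, ∑ b ∈ v, ∑ j ∈ s, ∑ k ∈ t, F j k a b :=
  calc ∑ j ∈ s, ∑ k ∈ t, ∑ a ∈ u, ∑ b ∈ v, F j k a b
      = ∑ j ∈ s, ∑ a ∈ u, ∑ k ∈ t, ∑ b ∈ v, F j k a b :=
        Finset.sum_congr rfl fun j _ => Finset.sum_comm
    _ = ∑ a ∈ u, ∑ j ∈ s, ∑ k ∈ t, ∑ b ∈ v, F j k a b := Finset.sum_comm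
    _ = ∑ a ∈ u, ∑ j ∈ s, ∑ b ∈ v, ∑ k ∈ t, F j k a b :=
        Finset.sum_congr rfl fun a _ => Finset.sum_congr rfl fun j _ => Finset.sum_comm
    _ = ∑ a ∈ u, ∑ b ∈ v, ∑ j ∈ s, ∑ k ∈ t, F j k a b :=
        Finset.sum_congr rfl fun a _ => Finset.sum_comm

lemma qform (n m : ℕ) (hmn : n < m) (c d : Polynomial ℝ) (θ : ℝ) :
    ∑ j ∈ range m, ∑ k ∈ range m,
      (if ((j:ℤ) - k).natAbs ≤ n then
        ((m:ℝ) / ((m:ℝ) - ((((j:ℤ) - k).natAbs : ℕ) : ℝ))) *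
          pcdCoeff n c d (((j:ℤ) - k).natAbs)
      else 0) * Real.cos (((j - k : ℤ) : ℝ) * θ)
    = (m:ℝ) * (2 * ∑ a ∈ range (n+1), ∑ b ∈ range (n+1),
        c.coeff a * d.coeff b * Real.cos (((a - b : ℤ) : ℝ) * θ)) := by
  have hterm : ∀ j ∈ range m, ∀ k ∈ range m,
      (if ((j:ℤ) - k).natAbs ≤ n then
        ((m:ℝ) / ((m:ℝ) - ((((j:ℤ) - k).natAbs : ℕ) : ℝ))) *
          pcdCoeff n c d (((j:ℤ) - k).natAbs)
      else 0) * Real.cos (((j - k : ℤ) : ℝ) * θ)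
      = ∑ a ∈ range (n+1), ∑ b ∈ range (n+1),
          c.coeff a * d.coeff b *
            (if ((a:ℤ) - b).natAbs = ((j:ℤ) - k).natAbs then
              ((m:ℝ) / ((m:ℝ) - ((((j:ℤ) - k).natAbs : ℕ) : ℝ))) *
                (if ((j:ℤ) - k).natAbs = 0 then (2:ℝ) else 1) *
                Real.cos (((j - k : ℤ) : ℝ) * θ)
            else 0) := by
    intro j _ k _
    by_cases h : ((j:ℤ) - k).natAbs ≤ n
    · rw [if_pos h, pcd_eq]
      have rhs_eq : ∑ a ∈ range (n+1), ∑ b ∈ range (n+1),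
          c.coeff a * d.coeff b *
            (if ((a:ℤ) - b).natAbs = ((j:ℤ) - k).natAbs then
              ((m:ℝ) / ((m:ℝ) - ((((j:ℤ) - k).natAbs : ℕ) : ℝ))) *
                (if ((j:ℤ) - k).natAbs = 0 then (2:ℝ) else 1) *
                Real.cos (((j - k : ℤ) : ℝ) * θ)
            else 0)
          = (∑ a ∈ range (n+1), ∑ b ∈ range (n+1),
              (if ((a:ℤ) - b).natAbs = ((j:ℤ) - k).natAbs then c.coeff a * d.coeff b else 0)) *
            (((m:ℝ) / ((m:ℝ) - ((((j:ℤ) - k).natAbs : ℕ) : ℝ))) *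
              (if ((j:ℤ) - k).natAbs = 0 then (2:ℝ) else 1) *
              Real.cos (((j - k : ℤ) : ℝ) * θ)) := by
        rw [Finset.sum_mul]
        refine Finset.sum_congr rfl fun a _ => ?_
        rw [Finset.sum_mul]
        refine Finset.sum_congr rfl fun b _ => ?_
        by_cases hc : ((a:ℤ) - b).natAbs = ((j:ℤ) - k).natAbs
        · rw [if_pos hc, if_pos hc]
        · rw [if_neg hc, if_neg hc, mul_zero, zero_mul]
      rw [rhs_eq]
      ring
    · rw [if_neg h, zero_mul]
      symm
      refine Finset.sum_eq_zero fun a ha => Finset.sum_eq_zero fun b hb => ?_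
      rw [if_neg, mul_zero]
      intro hc
      have ha' := mem_range.1 ha
      have hb' := mem_range.1 hb
      omega
  rw [Finset.sum_congr rfl (fun j hj => Finset.sum_congr rfl fun k hk => hterm j hj k hk)]
  rw [sum4_swap]
  have inner : ∀ a ∈ range (n+1), ∀ b ∈ range (n+1),
      ∑ j ∈ range m, ∑ k ∈ range m,
        c.coeff a * d.coeff b *
          (if ((a:ℤ) - b).natAbs = ((j:ℤ) - k).natAbs then
            ((m:ℝ) / ((m:ℝ) - ((((j:ℤ) - k).natAbs : ℕ) : ℝ))) *
              (if ((j:ℤ) - k).natAbs = 0 then (2:ℝ) else 1) *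
              Real.cos (((j - k : ℤ) : ℝ) * θ)
          else 0)
      = c.coeff a * d.coeff b * (2 * (m:ℝ) * Real.cos (((a - b : ℤ) : ℝ) * θ)) := by
    intro a ha b hb
    have hl₀n : ((a:ℤ) - b).natAbs ≤ n := by
      have := mem_range.1 ha; have := mem_range.1 hb; omega
    have hl₀m : ((a:ℤ) - b).natAbs < m := lt_of_le_of_lt hl₀n hmn
    have pull1 : ∑ j ∈ range m, ∑ k ∈ range m,
        c.coeff a * d.coeff b *
          (if ((a:ℤ) - b).natAbs = ((j:ℤ) - k).natAbs then
            ((m:ℝ) / ((m:ℝ) - ((((j:ℤ) - k).natAbs : ℕ) : ℝ))) *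
              (if ((j:ℤ) - k).natAbs = 0 then (2:ℝ) else 1) *
              Real.cos (((j - k : ℤ) : ℝ) * θ)
          else 0)
        = c.coeff a * d.coeff b * ∑ j ∈ range m, ∑ k ∈ range m,
            (if ((a:ℤ) - b).natAbs = ((j:ℤ) - k).natAbs then
              ((m:ℝ) / ((m:ℝ) - ((((j:ℤ) - k).natAbs : ℕ) : ℝ))) *
                (if ((j:ℤ) - k).natAbs = 0 then (2:ℝ) else 1) *
                Real.cos (((j - k : ℤ) : ℝ) * θ)
            else 0) := by
      rw [Finset.mul_sum]
      exact Finset.sum_congr rfl fun j _ => by rw [Finset.mul_sum]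
    rw [pull1]
    congr 1
    have step : ∀ j ∈ range m, ∀ k ∈ range m,
        (if ((a:ℤ) - b).natAbs = ((j:ℤ) - k).natAbs then
          ((m:ℝ) / ((m:ℝ) - ((((j:ℤ) - k).natAbs : ℕ) : ℝ))) *
            (if ((j:ℤ) - k).natAbs = 0 then (2:ℝ) else 1) *
            Real.cos (((j - k : ℤ) : ℝ) * θ)
        else 0)
        = (((m:ℝ) / ((m:ℝ) - ((((a:ℤ) - b).natAbs : ℕ) : ℝ))) *
            (if ((a:ℤ) - b).natAbs = 0 then (2:ℝ) else 1)) *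
          (if ((j:ℤ) - k).natAbs = ((a:ℤ) - b).natAbs then
            Real.cos (((j - k : ℤ) : ℝ) * θ) else 0) := by
      intro j _ k _
      by_cases hc : ((a:ℤ) - b).natAbs = ((j:ℤ) - k).natAbs
      · rw [if_pos hc, if_pos hc.symm, hc]
      · rw [if_neg hc,
          if_neg (fun h : ((j:ℤ) - k).natAbs = ((a:ℤ) - b).natAbs => hc h.symm), mul_zero]
    rw [Finset.sum_congr rfl (fun j hj => Finset.sum_congr rfl fun k hk => step j hj k hk)]
    have pull2 : ∑ j ∈ range m, ∑ k ∈ range m,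
        (((m:ℝ) / ((m:ℝ) - ((((a:ℤ) - b).natAbs : ℕ) : ℝ))) *
            (if ((a:ℤ) - b).natAbs = 0 then (2:ℝ) else 1)) *
          (if ((j:ℤ) - k).natAbs = ((a:ℤ) - b).natAbs then
            Real.cos (((j - k : ℤ) : ℝ) * θ) else 0)
        = (((m:ℝ) / ((m:ℝ) - ((((a:ℤ) - b).natAbs : ℕ) : ℝ))) *
            (if ((a:ℤ) - b).natAbs = 0 then (2:ℝ) else 1)) *
          ∑ j ∈ range m, ∑ k ∈ range m,
            (if ((j:ℤ) - k).natAbs = ((a:ℤ) - b).natAbs then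
              Real.cos (((j - k : ℤ) : ℝ) * θ) else 0) := by
      rw [Finset.mul_sum]
      exact Finset.sum_congr rfl fun j _ => by rw [Finset.mul_sum]
    rw [pull2, count_cos m _ hl₀m θ,
      show Real.cos (((((a:ℤ) - b).natAbs : ℕ) : ℝ) * θ)
        = Real.cos (((a - b : ℤ) : ℝ) * θ) from (cos_natAbs _ _).symm]
    have hm : (m:ℝ) ≠ 0 := Nat.cast_ne_zero.2 (by omega)
    by_cases h0 : ((a:ℤ) - b).natAbs = 0
    · rw [if_pos h0, if_pos h0, h0]
      push_cast
      field_simp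
      ring
    · rw [if_neg h0, if_neg h0]
      have hml : (m:ℝ) - ((((a:ℤ) - b).natAbs : ℕ) : ℝ) ≠ 0 := by
        have : ((((a:ℤ) - b).natAbs : ℕ) : ℝ) < (m:ℝ) := by exact_mod_cast hl₀m
        linarith
      field_simp
  rw [Finset.sum_congr rfl (fun a ha => Finset.sum_congr rfl fun b hb => inner a ha b hb)]
  simp only [Finset.mul_sum]
  refine Finset.sum_congr rfl fun a _ => Finset.sum_congr rfl fun b _ => by ring

lemma posq (n m : ℕ) (hmn : n < m) (c d : Polynomial ℝ)
    (hPD : (Pmat n m (pcdCoeff n c d)).PosDef) (θ : ℝ) :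
    0 < 2 * ∑ a ∈ range (n+1), ∑ b ∈ range (n+1),
        c.coeff a * d.coeff b * Real.cos (((a - b : ℤ) : ℝ) * θ) := by
  have hm0 : 0 < m := lt_of_le_of_lt (Nat.zero_le n) hmn
  set P := Pmat n m (pcdCoeff n c d) with hP
  set g : ℕ → ℕ → ℝ := fun j k =>
    (if ((j:ℤ) - k).natAbs ≤ n then
      ((m:ℝ) / ((m:ℝ) - ((((j:ℤ) - k).natAbs : ℕ) : ℝ))) *
        pcdCoeff n c d (((j:ℤ) - k).natAbs)
    else 0) * Real.cos (((j - k : ℤ) : ℝ) * θ) with hg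
  set x : Fin m → ℝ := fun j => Real.cos ((j:ℕ) * θ) with hxdef
  set y : Fin m → ℝ := fun j => Real.sin ((j:ℕ) * θ) with hydef
  have hx : x ≠ 0 := by
    intro h
    have h0 := congrFun h ⟨0, hm0⟩
    simp [hxdef] at h0
  have h1 : 0 < dotProduct x (P *ᵥ x) := by
    have := hPD.dotProduct_mulVec_pos hx
    simpa using this
  have h2 : 0 ≤ dotProduct y (P *ᵥ y) := by
    have := hPD.posSemidef.dotProduct_mulVec_nonneg y
    simpa using this
  have hPg : ∀ (j k : Fin m), g (j:ℕ) (k:ℕ)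
      = P j k * Real.cos (((((j:ℕ):ℤ) - ((k:ℕ):ℤ) : ℤ) : ℝ) * θ) := fun j k => rfl
  have expand : dotProduct x (P *ᵥ x) + dotProduct y (P *ᵥ y)
      = ∑ j : Fin m, ∑ k : Fin m, g (j:ℕ) (k:ℕ) := by
    simp only [dotProduct, Matrix.mulVec, Finset.mul_sum, ← Finset.sum_add_distrib]
    refine Finset.sum_congr rfl fun j _ => Finset.sum_congr rfl fun k _ => ?_
    rw [hPg j k]
    have harg : (((((j:ℕ):ℤ) - ((k:ℕ):ℤ) : ℤ)) : ℝ) * θ = (j:ℕ) * θ - (k:ℕ) * θ := by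
      push_cast; ring
    rw [harg, Real.cos_sub, hxdef, hydef]
    ring
  have conv1 : ∑ j : Fin m, ∑ k : Fin m, g (j:ℕ) (k:ℕ)
      = ∑ j ∈ range m, ∑ k ∈ range m, g j k := by
    rw [Finset.sum_congr rfl (fun (j : Fin m) _ => Fin.sum_univ_eq_sum_range (g (j:ℕ)) m)]
    exact Fin.sum_univ_eq_sum_range (fun j => ∑ k ∈ range m, g j k) m
  have key : dotProduct x (P *ᵥ x) + dotProduct y (P *ᵥ y)
      = (m:ℝ) * (2 * ∑ a ∈ range (n+1), ∑ b ∈ range (n+1),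
          c.coeff a * d.coeff b * Real.cos (((a - b : ℤ) : ℝ) * θ)) := by
    rw [expand, conv1]
    simp only [hg]
    exact qform n m hmn c d θ
  have h3 : 0 < (m:ℝ) * (2 * ∑ a ∈ range (n+1), ∑ b ∈ range (n+1),
      c.coeff a * d.coeff b * Real.cos (((a - b : ℤ) : ℝ) * θ)) := by
    rw [← key]; linarith
  have hmr : 0 < (m:ℝ) := by exact_mod_cast hm0
  nlinarith [h3, hmr]

lemma aeval_exp_expand (n : ℕ) (p : Polynomial ℝ) (hp : p.natDegree = n) (w : ℂ) :
    Polynomial.aeval w p = ∑ a ∈ range (n+1), (p.coeff a : ℂ) * w ^ a := by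
  rw [Polynomial.aeval_eq_sum_range' (lt_of_le_of_lt (le_of_eq hp) (Nat.lt_succ_self n))]
  exact Finset.sum_congr rfl fun a _ => by rw [Complex.real_smul]

lemma reA (n : ℕ) (c d : Polynomial ℝ) (hcd : c.natDegree = n) (hdd : d.natDegree = n) (θ : ℝ) :
    ((Polynomial.aeval (Complex.exp (-(θ : ℂ) * Complex.I)) c) *
        (Polynomial.aeval (Complex.exp ((θ : ℂ) * Complex.I)) d) +
      (Polynomial.aeval (Complex.exp ((θ : ℂ) * Complex.I)) c) *
        (Polynomial.aeval (Complex.exp (-(θ : ℂ) * Complex.I)) d)).re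
    = 2 * ∑ a ∈ range (n+1), ∑ b ∈ range (n+1),
        c.coeff a * d.coeff b * Real.cos (((a - b : ℤ) : ℝ) * θ) := by
  have hconjexp : (starRingEnd ℂ) (Complex.exp (-(θ:ℂ) * Complex.I)) = Complex.exp ((θ:ℂ) * Complex.I) := by
    rw [← Complex.exp_conj]
    congr 1
    simp
  have hconjexp' : (starRingEnd ℂ) (Complex.exp ((θ:ℂ) * Complex.I)) = Complex.exp (-(θ:ℂ) * Complex.I) := by
    rw [← Complex.exp_conj]
    congr 1
    simp
  have hsecond : (Polynomial.aeval (Complex.exp ((θ:ℂ) * Complex.I)) c) *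
      (Polynomial.aeval (Complex.exp (-(θ:ℂ) * Complex.I)) d)
      = (starRingEnd ℂ) ((Polynomial.aeval (Complex.exp (-(θ:ℂ) * Complex.I)) c) *
        (Polynomial.aeval (Complex.exp ((θ:ℂ) * Complex.I)) d)) := by
    rw [_root_.map_mul, ← Polynomial.aeval_conj, ← Polynomial.aeval_conj, hconjexp, hconjexp']
  rw [hsecond, Complex.add_conj, Complex.ofReal_re]
  congr 1
  rw [aeval_exp_expand n c hcd, aeval_exp_expand n d hdd, Finset.sum_mul_sum]
  rw [Complex.re_sum]
  refine Finset.sum_congr rfl fun a ha => ?_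
  rw [Complex.re_sum]
  refine Finset.sum_congr rfl fun b hb => ?_
  have hterm : (c.coeff a : ℂ) * Complex.exp (-(θ:ℂ) * Complex.I) ^ a *
      ((d.coeff b : ℂ) * Complex.exp ((θ:ℂ) * Complex.I) ^ b)
      = ((c.coeff a * d.coeff b : ℝ) : ℂ) *
        Complex.exp ((((((b - a : ℤ) : ℝ)) * θ : ℝ) : ℂ) * Complex.I) := by
    rw [← Complex.exp_nat_mul, ← Complex.exp_nat_mul]
    rw [show ((c.coeff a : ℂ) * Complex.exp ((a:ℂ) * (-(θ:ℂ) * Complex.I)) *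
        ((d.coeff b : ℂ) * Complex.exp ((b:ℂ) * ((θ:ℂ) * Complex.I))))
        = ((c.coeff a * d.coeff b : ℝ) : ℂ) *
          (Complex.exp ((a:ℂ) * (-(θ:ℂ) * Complex.I)) * Complex.exp ((b:ℂ) * ((θ:ℂ) * Complex.I)))
        from by push_cast; ring]
    rw [← Complex.exp_add]
    congr 2
    push_cast
    ring
  rw [hterm, Complex.re_ofReal_mul, Complex.exp_ofReal_mul_I_re]
  rw [show (((b - a : ℤ) : ℝ)) = -(((a - b : ℤ) : ℝ)) from by push_cast; ring]
  rw [neg_mul, Real.cos_neg]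

lemma rev_eq (n : ℕ) (p : Polynomial ℝ) (hp : p.natDegree = n) (w : ℂ) (hw : w ≠ 0) :
    ∑ b ∈ range (n+1), (p.coeff b : ℂ) * w ^ (n - b)
      = w ^ n * Polynomial.aeval w⁻¹ p := by
  rw [aeval_exp_expand n p hp w⁻¹, Finset.mul_sum]
  refine Finset.sum_congr rfl fun b hb => ?_
  have hb' : b ≤ n := Nat.lt_succ_iff.mp (mem_range.1 hb)
  rw [inv_pow, pow_sub₀ w hw hb']
  ring

lemma rev_zero (n : ℕ) (p : Polynomial ℝ) (hm : p.Monic) (hp : p.natDegree = n) :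
    ∑ b ∈ range (n+1), (p.coeff b : ℂ) * (0:ℂ) ^ (n - b) = 1 := by
  rw [Finset.sum_eq_single n]
  · rw [Nat.sub_self, pow_zero, mul_one, ← hp, hm.coeff_natDegree, Complex.ofReal_one]
  · intro b hb hbn
    have hnb : n - b ≠ 0 := by have := mem_range.1 hb; omega
    rw [zero_pow hnb, mul_zero]
  · intro h; exact absurd (self_mem_range_succ n) h

lemma schur (n : ℕ) (c d : Polynomial ℝ) (hcm : c.Monic) (hcd : c.natDegree = n)
    (hdm : d.Monic) (hdd : d.natDegree = n)
    (hcstab : ∀ z : ℂ, Polynomial.aeval z c = 0 → ‖z‖ < 1)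
    (hpos : ∀ θ : ℝ,
      0 < ((Polynomial.aeval (Complex.exp (-(θ : ℂ) * Complex.I)) c) *
             (Polynomial.aeval (Complex.exp ((θ : ℂ) * Complex.I)) d) +
           (Polynomial.aeval (Complex.exp ((θ : ℂ) * Complex.I)) c) *
             (Polynomial.aeval (Complex.exp (-(θ : ℂ) * Complex.I)) d)).re) :
    ∀ z : ℂ, Polynomial.aeval z d = 0 → ‖z‖ < 1 := by
  have hposhalf : ∀ θ : ℝ,
      0 < ((Polynomial.aeval (Complex.exp (-(θ : ℂ) * Complex.I)) c) *
           (Polynomial.aeval (Complex.exp ((θ : ℂ) * Complex.I)) d)).re := by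
    intro θ
    have hp := hpos θ
    have hsecond : (Polynomial.aeval (Complex.exp ((θ:ℂ) * Complex.I)) c) *
        (Polynomial.aeval (Complex.exp (-(θ:ℂ) * Complex.I)) d)
        = (starRingEnd ℂ) ((Polynomial.aeval (Complex.exp (-(θ:ℂ) * Complex.I)) c) *
          (Polynomial.aeval (Complex.exp ((θ:ℂ) * Complex.I)) d)) := by
      rw [_root_.map_mul, ← Polynomial.aeval_conj, ← Polynomial.aeval_conj]
      rw [show (starRingEnd ℂ) (Complex.exp (-(θ:ℂ) * Complex.I)) = Complex.exp ((θ:ℂ) * Complex.I)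
        from by rw [← Complex.exp_conj]; congr 1; simp]
      rw [show (starRingEnd ℂ) (Complex.exp ((θ:ℂ) * Complex.I)) = Complex.exp (-(θ:ℂ) * Complex.I)
        from by rw [← Complex.exp_conj]; congr 1; simp]
    rw [hsecond, Complex.add_conj, Complex.ofReal_re] at hp
    linarith
  intro z hz
  by_contra hge
  push_neg at hge
  rcases eq_or_lt_of_le hge with heq | hgt
  · -- |z| = 1
    set θ := z.arg with hθ
    have hz1 : Complex.exp ((θ:ℂ) * Complex.I) = z := by
      have h := Complex.norm_mul_exp_arg_mul_I z
      rwa [← heq, Complex.ofReal_one, one_mul] at h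
    have hdz' : Polynomial.aeval ((starRingEnd ℂ) z) d = 0 := by
      rw [Polynomial.aeval_conj, hz, map_zero]
    have hz2 : Complex.exp (-(θ:ℂ) * Complex.I) = (starRingEnd ℂ) z := by
      rw [← hz1, ← Complex.exp_conj]; congr 1; simp
    have h1 := hposhalf θ
    rw [hz1, hz, mul_zero] at h1
    simp at h1
  · -- 1 < |z|
    set f : ℂ → ℂ := fun w => ∑ b ∈ range (n+1), (c.coeff b : ℂ) * w ^ (n - b) with hf
    set g : ℂ → ℂ := fun w => ∑ b ∈ range (n+1), (d.coeff b : ℂ) * w ^ (n - b) with hgdef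
    have hfdiff : Differentiable ℂ f :=
      Differentiable.fun_sum fun b _ => (differentiable_pow (n - b)).const_mul _
    have hgdiff : Differentiable ℂ g :=
      Differentiable.fun_sum fun b _ => (differentiable_pow (n - b)).const_mul _
    have hf0 : ∀ w ∈ Metric.closedBall (0:ℂ) 1, f w ≠ 0 := by
      intro w hw hfw
      have hwle : ‖w‖ ≤ 1 := by
        simpa [Complex.dist_eq] using Metric.mem_closedBall.1 hw
      rcases eq_or_ne w 0 with h0 | h0
      · rw [h0, show f (0:ℂ) = ∑ b ∈ range (n+1), (c.coeff b : ℂ) * (0:ℂ) ^ (n - b) from rfl,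
          rev_zero n c hcm hcd] at hfw
        exact one_ne_zero hfw
      · rw [show f w = ∑ b ∈ range (n+1), (c.coeff b : ℂ) * w ^ (n - b) from rfl,
          rev_eq n c hcd w h0] at hfw
        have hcz : Polynomial.aeval w⁻¹ c = 0 :=
          (mul_eq_zero.1 hfw).resolve_left (pow_ne_zero n h0)
        have := hcstab _ hcz
        rw [norm_inv] at this
        have hwpos : 0 < ‖w‖ := by
          simpa [norm_pos_iff] using h0
        have : (1:ℝ) < ‖w‖ := by
          rw [inv_lt_one_iff₀] at this
          rcases this with h | h
          · exact absurd h (not_le.2 hwpos)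
          · exact h
        linarith
    have hsphere : ∀ w ∈ Metric.sphere (0:ℂ) 1, 0 < (g w / f w).re := by
      intro w hw
      have habs : ‖w‖ = 1 := by
        simpa [Complex.dist_eq] using hw
      have hwne : w ≠ 0 := by
        intro h0; rw [h0] at habs; simp at habs
      set θ := -w.arg with hθ
      have hw1 : Complex.exp (-(θ:ℂ) * Complex.I) = w := by
        rw [hθ]
        push_cast
        rw [neg_neg]
        have h := Complex.norm_mul_exp_arg_mul_I w
        rwa [habs, Complex.ofReal_one, one_mul] at h
      have hw2 : w⁻¹ = Complex.exp ((θ:ℂ) * Complex.I) := by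
        rw [← hw1, ← Complex.exp_neg]
        congr 1
        ring
      have hwn : w ^ n ≠ 0 := pow_ne_zero _ hwne
      have hfw : f w = w ^ n * Polynomial.aeval (Complex.exp ((θ:ℂ) * Complex.I)) c := by
        rw [show f w = ∑ b ∈ range (n+1), (c.coeff b : ℂ) * w ^ (n - b) from rfl,
          rev_eq n c hcd w hwne, hw2]
      have hgw : g w = w ^ n * Polynomial.aeval (Complex.exp ((θ:ℂ) * Complex.I)) d := by
        rw [show g w = ∑ b ∈ range (n+1), (d.coeff b : ℂ) * w ^ (n - b) from rfl,
          rev_eq n d hdd w hwne, hw2]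
      rw [hfw, hgw, mul_div_mul_left _ _ hwn]
      have hCne : Polynomial.aeval (Complex.exp ((θ:ℂ) * Complex.I)) c ≠ 0 := by
        intro h
        have := hcstab _ h
        rw [Complex.norm_exp_ofReal_mul_I] at this
        exact lt_irrefl 1 this
      have hconjC : (starRingEnd ℂ) (Polynomial.aeval (Complex.exp ((θ:ℂ) * Complex.I)) c)
          = Polynomial.aeval (Complex.exp (-(θ:ℂ) * Complex.I)) c := by
        rw [← Polynomial.aeval_conj]
        congr 1
        rw [← Complex.exp_conj]
        congr 1
        simp
      have hdiv : (Polynomial.aeval (Complex.exp ((θ:ℂ) * Complex.I)) d /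
            Polynomial.aeval (Complex.exp ((θ:ℂ) * Complex.I)) c).re
          = (Complex.normSq (Polynomial.aeval (Complex.exp ((θ:ℂ) * Complex.I)) c))⁻¹ *
            ((Polynomial.aeval (Complex.exp (-(θ:ℂ) * Complex.I)) c) *
              (Polynomial.aeval (Complex.exp ((θ:ℂ) * Complex.I)) d)).re := by
        rw [div_eq_mul_inv, Complex.inv_def]
        rw [show Polynomial.aeval (Complex.exp ((θ:ℂ) * Complex.I)) d *
            ((starRingEnd ℂ) (Polynomial.aeval (Complex.exp ((θ:ℂ) * Complex.I)) c) *
              ((Complex.normSq (Polynomial.aeval (Complex.exp ((θ:ℂ) * Complex.I)) c))⁻¹ : ℝ))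
            = ((Complex.normSq (Polynomial.aeval (Complex.exp ((θ:ℂ) * Complex.I)) c))⁻¹ : ℝ) *
              ((starRingEnd ℂ) (Polynomial.aeval (Complex.exp ((θ:ℂ) * Complex.I)) c) *
                Polynomial.aeval (Complex.exp ((θ:ℂ) * Complex.I)) d) from by ring]
        rw [Complex.re_ofReal_mul, hconjC]
      rw [hdiv]
      have hnsq : 0 < Complex.normSq (Polynomial.aeval (Complex.exp ((θ:ℂ) * Complex.I)) c) :=
        Complex.normSq_pos.2 hCne
      exact mul_pos (inv_pos.2 hnsq) (hposhalf θ)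
    have hcont : ContinuousOn (fun w => (g w / f w).re) (Metric.sphere (0:ℂ) 1) :=
      Complex.continuous_re.comp_continuousOn
        ((hgdiff.continuous.continuousOn).div (hfdiff.continuous.continuousOn)
          fun w hw => hf0 w (Metric.sphere_subset_closedBall hw))
    obtain ⟨w₀, hw₀s, hw₀min⟩ := (isCompact_sphere (0:ℂ) 1).exists_isMinOn
      ⟨1, by simp⟩ hcont
    have hεpos : 0 < (g w₀ / f w₀).re := hsphere w₀ hw₀s
    have hdcc : DiffContOnCl ℂ (fun w => g w / f w) (Metric.ball (0:ℂ) 1) := by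
      constructor
      · intro w hw
        exact ((hgdiff w).div (hfdiff w)
          (hf0 w (Metric.ball_subset_closedBall hw))).differentiableWithinAt
      · rw [closure_ball (0:ℂ) one_ne_zero]
        exact (hgdiff.continuous.continuousOn).div (hfdiff.continuous.continuousOn)
          fun w hw => hf0 w hw
    have hFdcc : DiffContOnCl ℂ (fun w => Complex.exp (-(g w / f w))) (Metric.ball (0:ℂ) 1) :=
      Complex.differentiable_exp.comp_diffContOnCl hdcc.neg
    have hbound : ∀ w ∈ frontier (Metric.ball (0:ℂ) 1),
        ‖Complex.exp (-(g w / f w))‖ ≤ Real.exp (-(g w₀ / f w₀).re) := by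
      rw [frontier_ball (0:ℂ) one_ne_zero]
      intro w hw
      rw [Complex.norm_exp]
      apply Real.exp_le_exp.2
      have hm := hw₀min hw
      simp only [Complex.neg_re]
      simp only [Set.mem_setOf_eq] at hm
      linarith [hm]
    have hzne : z ≠ 0 := by
      intro h0; rw [h0] at hgt; simp at hgt; linarith
    have hw₁mem : z⁻¹ ∈ closure (Metric.ball (0:ℂ) 1) := by
      rw [closure_ball (0:ℂ) one_ne_zero]
      rw [Metric.mem_closedBall, Complex.dist_eq, sub_zero, norm_inv]
      exact inv_le_one_of_one_le₀ hge
    have hgw₁ : g z⁻¹ = 0 := by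
      rw [show g z⁻¹ = ∑ b ∈ range (n+1), (d.coeff b : ℂ) * (z⁻¹) ^ (n - b) from rfl,
        rev_eq n d hdd z⁻¹ (inv_ne_zero hzne), inv_inv, hz, mul_zero]
    have happ := Complex.norm_le_of_forall_mem_frontier_norm_le
      Metric.isBounded_ball hFdcc hbound hw₁mem
    rw [hgw₁, zero_div, neg_zero, Complex.exp_zero, norm_one] at happ
    have hlt : Real.exp (-(g w₀ / f w₀).re) < 1 :=
      Real.exp_lt_one_iff.2 (by linarith)
    linarith

/-- If the weighted Toeplitz matrix `P^{c,d}_m` is positive definite, then `p^{c,d} > 0`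
everywhere and `d` is Schur stable. -/
theorem stmt9 (n m : ℕ) (hmn : n < m) (c d : Polynomial ℝ)
    (hcm : c.Monic) (hcd : c.natDegree = n)
    (hdm : d.Monic) (hdd : d.natDegree = n)
    (hcstab : ∀ z : ℂ, Polynomial.aeval z c = 0 → ‖z‖ < 1)
    (hPD : (Pmat n m (pcdCoeff n c d)).PosDef) :
    (∀ θ : ℝ,
      0 < ((Polynomial.aeval (Complex.exp (-(θ : ℂ) * Complex.I)) c) *
             (Polynomial.aeval (Complex.exp ((θ : ℂ) * Complex.I)) d) +
           (Polynomial.aeval (Complex.exp ((θ : ℂ) * Complex.I)) c) *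
             (Polynomial.aeval (Complex.exp (-(θ : ℂ) * Complex.I)) d)).re) ∧
    (∀ z : ℂ, Polynomial.aeval z d = 0 → ‖z‖ < 1) := by
  have part1 : ∀ θ : ℝ,
      0 < ((Polynomial.aeval (Complex.exp (-(θ : ℂ) * Complex.I)) c) *
             (Polynomial.aeval (Complex.exp ((θ : ℂ) * Complex.I)) d) +
           (Polynomial.aeval (Complex.exp ((θ : ℂ) * Complex.I)) c) *
             (Polynomial.aeval (Complex.exp (-(θ : ℂ) * Complex.I)) d)).re := by
    intro θ
    rw [reA n c d hcd hdd θ]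
    exact posq n m hmn c d hPD θ
  exact ⟨part1, schur n c d hcm hcd hdm hdd hcstab part1⟩
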